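/- Let n ≥ 1 be an integer, let x be a nonempty word over a linearly ordered finite alphabet, and let W be a word containing 2n−1 pairwise disjoint occurrences of subwords of the form x^{pᵢ}·vᵢ (i = 1, …, 2n−1), where each pᵢ > n and each vᵢ is a word of the same length as x with vᵢ ≠ x. Then W is n-divisible. -/

import Mathlib

/-- `u` is lexicographically greater than `v`: at the first position where they
differ, `u` has the larger letter (words where one is a prefix of the other are
incomparable). -/
def WordGt {α : Type*} [LinearOrder α] (u v : List α) : Prop :=
  List.Lex (· < ·) v u ∧ ¬ v <+: u

/-- `wpow z k` is the concatenation of `k` copies of the word `z`. -/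
def wpow {α : Type*} (z : List α) : ℕ → List α
  | 0 => []
  | k + 1 => z ++ wpow z k

/-- A word is noncyclic (primitive) if it is nonempty and is not a proper power. -/
def Noncyclic {α : Type*} (z : List α) : Prop :=
  z ≠ [] ∧ ∀ (v : List α) (k : ℕ), 2 ≤ k → z ≠ wpow v k

/-- `W` is `n`-divisible: `W = W₀W₁⋯Wₙ` with `W₁,…,Wₙ` nonempty and in strictly
decreasing lexicographic order. -/
def NDivisible {α : Type*} [LinearOrder α] (W : List α) (n : ℕ) : Prop :=
  ∃ (W₀ : List α) (f : Fin n → List α),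
    W = W₀ ++ (List.ofFn f).flatten ∧
    (∀ i, f i ≠ []) ∧
    (∀ i j, i < j → WordGt (f i) (f j))

/-- `W` is strongly `n`-divisible over the set of words `Z` (with boundary `2n`):
it is `n`-divisible with each `Wᵢ` (`1 ≤ i ≤ n`) beginning with `zᵢ^{2n}` for
pairwise distinct `z₁,…,zₙ ∈ Z`. -/
def StronglyNDivisible {α : Type*} [LinearOrder α] (W : List α) (n : ℕ)
    (Z : Set (List α)) : Prop :=
  ∃ (W₀ : List α) (f : Fin n → List α) (z : Fin n → List α),
    W = W₀ ++ (List.ofFn f).flatten ∧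
    (∀ i, f i ≠ []) ∧
    (∀ i j, i < j → WordGt (f i) (f j)) ∧
    (∀ i, z i ∈ Z ∧ wpow (z i) (2 * n) <+: f i) ∧
    Function.Injective z

/-- `u` occurs as a subword of `W` starting at position `p`. -/
def OccursAt {α : Type*} (W u : List α) (p : ℕ) : Prop :=
  ∃ pre suf : List α, pre.length = p ∧ W = pre ++ u ++ suf

namespace NDivAux
variable {α : Type*}

theorem wpow_length (z : List α) (k : ℕ) : (wpow z k).length = k * z.length := by
  induction k with
  | zero => simp [wpow]
  | succ k ih => simp [wpow, ih]; ring

theorem wpow_add (z : List α) (a b : ℕ) : wpow z (a + b) = wpow z a ++ wpow z b := by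
  induction a with
  | zero => simp [wpow]
  | succ a ih => rw [Nat.succ_add]; simp [wpow, ih]

theorem wpow_one (z : List α) : wpow z 1 = z := by simp [wpow]

theorem wpow_succ' (z : List α) (k : ℕ) : wpow z (k + 1) = wpow z k ++ z := by
  rw [wpow_add, wpow_one]

theorem wpow_prefix (z : List α) {a b : ℕ} (h : a ≤ b) : wpow z a <+: wpow z b :=
  ⟨wpow z (b - a), by rw [← wpow_add, Nat.add_sub_cancel' h]⟩

theorem lex_append_left {r : α → α → Prop} {u v : List α} (h : List.Lex r u v) (s : List α) :
    List.Lex r (s ++ u) (s ++ v) := by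
  induction s with
  | nil => simpa
  | cons a s ih => exact List.Lex.cons ih

theorem lex_ext [LinearOrder α] :
    ∀ {z y : List α}, List.Lex (· < ·) z y → z.length = y.length →
    ∀ s t : List α, List.Lex (· < ·) (z ++ s) (y ++ t) ∧ ¬ (z ++ s) <+: (y ++ t) := by
  intro z y h
  induction h with
  | nil => intro hl; simp at hl
  | @rel a l₁ b l₂ hab =>
    intro _ s t
    refine ⟨List.Lex.rel hab, ?_⟩
    rw [List.cons_append, List.cons_append, List.cons_prefix_cons]
    rintro ⟨rfl, -⟩
    exact lt_irrefl _ hab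
  | @cons a l₁ l₂ h ih =>
    intro hl s t
    have hl' : l₁.length = l₂.length := by simpa using hl
    refine ⟨List.Lex.cons (ih hl' s t).1, ?_⟩
    rw [List.cons_append, List.cons_append, List.cons_prefix_cons]
    rintro ⟨-, hpre⟩
    exact (ih hl' s t).2 hpre

theorem wordGt_of [LinearOrder α] {U V y z : List α} (hy : y <+: U) (hz : z <+: V)
    (hlen : z.length = y.length) (hlex : List.Lex (· < ·) z y) : WordGt U V := by
  obtain ⟨t, rfl⟩ := hy
  obtain ⟨s, rfl⟩ := hz
  exact lex_ext hlex hlen s t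

theorem seg_append (W : List α) {a b c : ℕ} (hab : a ≤ b) (hbc : b ≤ c) :
    (W.take b).drop a ++ (W.take c).drop b = (W.take c).drop a := by
  have key : ((W.take c).take b).drop a ++ (W.take c).drop b = (W.take c).drop a := by
    rw [List.drop_take (i := a) (j := b), show (W.take c).drop b = ((W.take c).drop a).drop (b-a) by
      rw [List.drop_drop]; congr 1; omega]
    exact List.take_append_drop _ _
  rwa [List.take_take, Nat.min_eq_left hbc] at key

theorem prefix_seg {W u rest : List α} {a b : ℕ} (h : W.drop a = u ++ rest)
    (hb : a + u.length ≤ b) : u <+: (W.take b).drop a := by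
  rw [List.drop_take, h, List.take_append,
    List.take_of_length_le (by omega)]
  exact ⟨_, rfl⟩

theorem flatten_segs (W : List α) (k : ℕ) (c : ℕ → ℕ) (hc : Monotone c) :
    (List.ofFn fun j : Fin k => (W.take (c ((j:ℕ)+1))).drop (c (j:ℕ))).flatten
      = (W.take (c k)).drop (c 0) := by
  induction k with
  | zero => simp
  | succ k ih =>
    rw [List.ofFn_succ', List.concat_eq_append, List.flatten_append]
    simp only [Fin.coe_castSucc, Fin.val_last]
    rw [ih, List.flatten_cons, List.flatten_nil, List.append_nil]
    exact seg_append W (hc (Nat.zero_le k)) (hc (Nat.le_succ k))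

theorem lex_trichotomy [LinearOrder α] :
    ∀ (u w : List α), u.length = w.length → u ≠ w →
      List.Lex (· < ·) u w ∨ List.Lex (· < ·) w u := by
  intro u
  induction u with
  | nil => intro w h _; cases w with
    | nil => simp_all
    | cons b w => simp at h
  | cons a u ih =>
    intro w h hne
    cases w with
    | nil => simp at h
    | cons b w =>
      rcases lt_trichotomy a b with h1 | rfl | h1
      · exact Or.inl (List.Lex.rel h1)
      · rcases ih w (by simpa using h) (fun e => hne (by rw [e])) with h2 | h2
        · exact Or.inl (List.Lex.cons h2)
        · exact Or.inr (List.Lex.cons h2)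
      · exact Or.inr (List.Lex.rel h1)

theorem main_construction [LinearOrder α] (n : ℕ) (x : List α) (hx : x ≠ [])
    (W : List α) (q : Fin n → ℕ) (u : Fin n → List α) (π : Fin n → ℕ) (a : Fin n → ℕ)
    (ha1 : ∀ j, 1 ≤ a j) (haq : ∀ j, a j ≤ q j)
    (hu : ∀ j, (u j).length = x.length)
    (hocc : ∀ j, OccursAt W (wpow x (q j) ++ u j) (π j))
    (horder : ∀ j k : Fin n, (j:ℕ) < (k:ℕ) → π j + (q j + 1) * x.length ≤ π k)
    (hcmp : ∀ j k : Fin n, (j:ℕ) < (k:ℕ) → ∃ y z : List α,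
        y <+: wpow x (a j) ++ u j ∧ z <+: wpow x (a k) ++ u k ∧
        z.length = y.length ∧ List.Lex (· < ·) z y) :
    NDivisible W n := by
  classical
  set L := x.length with hL
  have hL1 : 1 ≤ L := List.length_pos_iff.mpr hx
  set c : ℕ → ℕ := fun k => if h : k < n then π ⟨k, h⟩ + (q ⟨k, h⟩ - a ⟨k, h⟩) * L
    else W.length with hc
  have hcj : ∀ j : Fin n, c (j : ℕ) = π j + (q j - a j) * L := by
    intro j; simp only [hc, dif_pos j.isLt]
  -- end of occurrence j is within W
  have hWlen : ∀ j, π j + (q j + 1) * L ≤ W.length := by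
    intro j
    obtain ⟨pre, suf, hpre, hW⟩ := hocc j
    have := congrArg List.length hW
    simp [wpow_length, hu j, hpre] at this
    simp [this]; nlinarith [hu j, hpre]
  -- the drop at c j starts with wpow x (a j) ++ u j
  have hdrop : ∀ j : Fin n, ∃ rest, W.drop (c (j:ℕ)) = (wpow x (a j) ++ u j) ++ rest := by
    intro j
    obtain ⟨pre, suf, hpre, hW⟩ := hocc j
    refine ⟨suf, ?_⟩
    have hq : a j ≤ q j := haq j
    rw [hcj j, hW, show wpow x (q j) = wpow x (q j - a j) ++ wpow x (a j) from by
      rw [← wpow_add]; congr 1; omega]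
    rw [show pre ++ (wpow x (q j - a j) ++ wpow x (a j) ++ u j) ++ suf
        = (pre ++ wpow x (q j - a j)) ++ ((wpow x (a j) ++ u j) ++ suf) by
      simp [List.append_assoc]]
    rw [show π j + (q j - a j) * L = (pre ++ wpow x (q j - a j)).length by
      simp [wpow_length, hpre, hL]]
    exact List.drop_left
  have hstep : ∀ k, c k ≤ c (k + 1) := by
    intro k
    by_cases h1 : k + 1 < n
    · have h0 : k < n := by omega
      have := horder ⟨k, h0⟩ ⟨k+1, h1⟩ (by simp)
      simp only [hc, dif_pos h0, dif_pos h1]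
      have hmul : (q ⟨k, h0⟩ - a ⟨k, h0⟩) * L ≤ (q ⟨k, h0⟩ + 1) * L :=
        Nat.mul_le_mul_right _ (by omega)
      omega
    · by_cases h0 : k < n
      · have := hWlen ⟨k, h0⟩
        simp only [hc, dif_pos h0, dif_neg h1]
        have hmul : (q ⟨k, h0⟩ - a ⟨k, h0⟩) * L ≤ (q ⟨k, h0⟩ + 1) * L :=
          Nat.mul_le_mul_right _ (by omega)
        omega
      · simp only [hc, dif_neg h0, dif_neg h1]; omega
  have hmono : Monotone c := monotone_nat_of_le_succ hstep
  have hfit : ∀ j : Fin n, c (j:ℕ) + (wpow x (a j) ++ u j).length ≤ c ((j:ℕ) + 1) := by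
    intro j
    have hlen : (wpow x (a j) ++ u j).length = (a j + 1) * L := by
      simp [wpow_length, hu j, hL]; ring
    rw [hcj j, hlen]
    have hsum : π j + (q j - a j) * L + (a j + 1) * L = π j + (q j + 1) * L := by
      have hq := haq j
      have : (q j - a j) * L + (a j + 1) * L = (q j + 1) * L := by
        rw [← Nat.add_mul]; congr 1; omega
      omega
    rw [hsum]
    by_cases h1 : (j:ℕ) + 1 < n
    · have := horder j ⟨(j:ℕ)+1, h1⟩ (by simp)
      have h2 : c ((j:ℕ)+1) = π ⟨(j:ℕ)+1, h1⟩ + (q ⟨(j:ℕ)+1, h1⟩ - a ⟨(j:ℕ)+1, h1⟩) * L := by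
        simp only [hc, dif_pos h1]
      omega
    · have h2 : c ((j:ℕ)+1) = W.length := by simp only [hc, dif_neg h1]
      rw [h2]; exact hWlen j
  set f : Fin n → List α := fun j => (W.take (c ((j:ℕ)+1))).drop (c (j:ℕ)) with hf
  have hpref : ∀ j : Fin n, wpow x (a j) ++ u j <+: f j := by
    intro j
    obtain ⟨rest, hrest⟩ := hdrop j
    exact prefix_seg hrest (hfit j)
  refine ⟨W.take (c 0), f, ?_, ?_, ?_⟩
  · rw [hf, flatten_segs W n c hmono]
    have : c n = W.length := by simp only [hc, dif_neg (lt_irrefl n)]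
    rw [this, List.take_length, ← List.take_append_drop (c 0) W]
    simp
  · intro j
    intro hnil
    have := (hpref j)
    rw [hnil] at this
    have := List.prefix_nil.mp this
    have hlen := congrArg List.length this
    simp [wpow_length, hu j] at hlen
    have := ha1 j; omega
  · intro i j hij
    obtain ⟨y, z, hy, hz, hlen, hlex⟩ := hcmp i j hij
    exact wordGt_of (hy.trans (hpref i)) (hz.trans (hpref j)) hlen hlex
end NDivAux

open NDivAux in
/-- If a word `W` over a finite linearly ordered alphabet contains `2n−1`
pairwise disjoint occurrences of subwords `x^{pᵢ}·vᵢ`, where `x` is a fixed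
nonempty word, each `pᵢ > n` and each `vᵢ` has the same length as `x` with
`vᵢ ≠ x`, then `W` is `n`-divisible. -/
theorem n_divisible_of_many_periodic_subwords {α : Type*} [LinearOrder α]
    [Fintype α] (n : ℕ) (hn : 1 ≤ n) (x : List α) (hx : x ≠ [])
    (W : List α)
    (p : Fin (2 * n - 1) → ℕ) (v : Fin (2 * n - 1) → List α)
    (pos : Fin (2 * n - 1) → ℕ)
    (hp : ∀ i, n < p i)
    (hv : ∀ i, (v i).length = x.length ∧ v i ≠ x)
    (hocc : ∀ i, OccursAt W (wpow x (p i) ++ v i) (pos i))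
    (hdisj : ∀ i j, i ≠ j →
      pos i + (wpow x (p i) ++ v i).length ≤ pos j ∨
      pos j + (wpow x (p j) ++ v j).length ≤ pos i) :
    NDivisible W n := by
  classical
  have hL1 : 1 ≤ x.length := List.length_pos_iff.mpr hx
  have hlenocc : ∀ i, (wpow x (p i) ++ v i).length = (p i + 1) * x.length := by
    intro i
    rw [List.length_append, wpow_length, (hv i).1]; ring
  have hposne : ∀ i j, i ≠ j → pos i ≠ pos j := by
    intro i j hij heq
    have h1 : 1 ≤ (p i + 1) * x.length := Nat.mul_pos (by omega) hL1
    have h2 : 1 ≤ (p j + 1) * x.length := Nat.mul_pos (by omega) hL1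
    rcases hdisj i j hij with h | h <;> rw [hlenocc] at h <;> omega
  have key : ∀ (T : Finset (Fin (2 * n - 1))), T.card = n →
      (∀ i ∈ T, List.Lex (· < ·) (v i) x) ∨ (∀ i ∈ T, List.Lex (· < ·) x (v i)) →
      NDivisible W n := by
    intro T hT hclass
    have hinj : Set.InjOn pos T := fun i _ j _ h => by
      by_contra hne; exact hposne i j hne h
    have hPcard : (T.image pos).card = n := by rw [Finset.card_image_of_injOn hinj, hT]
    have hchoose : ∀ j : Fin n, ∃ i, i ∈ T ∧ pos i = ((T.image pos).orderIsoOfFin hPcard j : ℕ) := by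
      intro j
      have := ((T.image pos).orderIsoOfFin hPcard j).2
      rw [Finset.mem_image] at this
      obtain ⟨i, hi, hpi⟩ := this
      exact ⟨i, hi, hpi⟩
    choose e heT hepos using hchoose
    have hmono : ∀ j k : Fin n, (j:ℕ) < (k:ℕ) → pos (e j) < pos (e k) := by
      intro j k hjk
      rw [hepos j, hepos k]
      exact_mod_cast Subtype.coe_lt_coe.mpr
        (((T.image pos).orderIsoOfFin hPcard).strictMono (show j < k from hjk))
    have horder : ∀ j k : Fin n, (j:ℕ) < (k:ℕ) →
        pos (e j) + (p (e j) + 1) * x.length ≤ pos (e k) := by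
      intro j k hjk
      have hne : e j ≠ e k := by
        intro h; exact absurd (congrArg pos h) (Nat.ne_of_lt (hmono j k hjk))
      rcases hdisj (e j) (e k) hne with h | h
      · rwa [hlenocc] at h
      · rw [hlenocc] at h
        have h1 := hmono j k hjk
        omega
    rcases hclass with hcl | hcl
    · -- v < x : exponents a j = n - j (decreasing)
      refine main_construction n x hx W (fun j => p (e j)) (fun j => v (e j))
        (fun j => pos (e j)) (fun j => n - (j:ℕ)) ?_ ?_ ?_ (fun j => hocc (e j)) horder ?_
      · intro j; have := j.isLt; omega
      · intro j; have := hp (e j); have := j.isLt; omega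
      · intro j; exact (hv (e j)).1
      · intro j k hjk
        have hkn := k.isLt
        refine ⟨wpow x ((n - (k:ℕ)) + 1), wpow x (n - (k:ℕ)) ++ v (e k), ?_, ?_, ?_, ?_⟩
        · exact (wpow_prefix x (show n - (k:ℕ) + 1 ≤ n - (j:ℕ) by omega)).trans
            (List.prefix_append _ _)
        · exact List.prefix_refl _
        · rw [List.length_append, wpow_length, wpow_length, (hv (e k)).1]; ring
        · rw [wpow_succ']
          exact lex_append_left (hcl (e k) (heT k)) _
    · -- x < v : exponents a j = j + 1 (increasing)
      refine main_construction n x hx W (fun j => p (e j)) (fun j => v (e j))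
        (fun j => pos (e j)) (fun j => (j:ℕ) + 1) ?_ ?_ ?_ (fun j => hocc (e j)) horder ?_
      · intro j; omega
      · intro j; have := hp (e j); have := j.isLt; omega
      · intro j; exact (hv (e j)).1
      · intro j k hjk
        refine ⟨wpow x ((j:ℕ) + 1) ++ v (e j), wpow x ((j:ℕ) + 1) ++ x, ?_, ?_, ?_, ?_⟩
        · exact List.prefix_refl _
        · refine List.IsPrefix.trans ?_ (List.prefix_append _ _)
          rw [← wpow_succ']
          exact wpow_prefix x (show (j:ℕ) + 1 + 1 ≤ (k:ℕ) + 1 by omega)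
        · rw [List.length_append, List.length_append, (hv (e j)).1]
        · exact lex_append_left (hcl (e j) (heT j)) _
  by_cases hbig : n ≤ (Finset.univ.filter (fun i => List.Lex (· < ·) (v i) x)).card
  · obtain ⟨T, hTS, hTcard⟩ := Finset.exists_subset_card_eq hbig
    refine key T hTcard (Or.inl ?_)
    intro i hi
    have hmem := hTS hi
    rw [Finset.mem_filter] at hmem
    exact hmem.2
  · have hcard : (Finset.univ.filter (fun i => List.Lex (· < ·) (v i) x)).card
        + (Finset.univ.filter (fun i => ¬ List.Lex (· < ·) (v i) x)).card = 2 * n - 1 := by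
      rw [Finset.card_filter_add_card_filter_not]
      simp
    have hbig2 : n ≤ (Finset.univ.filter (fun i => ¬ List.Lex (· < ·) (v i) x)).card := by
      omega
    obtain ⟨T, hTS, hTcard⟩ := Finset.exists_subset_card_eq hbig2
    refine key T hTcard (Or.inr ?_)
    intro i hi
    have hmem := hTS hi
    rw [Finset.mem_filter] at hmem
    rcases lex_trichotomy (v i) x (hv i).1 (hv i).2 with h | h
    · exact absurd h hmem.2
    · exact h
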